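/- Let u > 1, K > 0 and α ∈ (0,1) be real numbers. Then there exists n₀ ∈ ℤ such that K − u^{n₀} > α·(K − u^{n₀−1}) and K − u^{n₀+1} ≤ α·(K − u^{n₀}) (integer powers uⁿ denote real zpow). In particular, for such n₀ one has 0 < K − u^{n₀} and u^{n₀−1} < K, i.e., n₀ ≤ ⌊log_u K⌋. -/
import Mathlib


/-- Existence of the threshold level `n₀` characterized by the sandwich
`(K - u^(n₀))/(K - u^(n₀-1)) > α ≥ (K - u^(n₀+1))/(K - u^(n₀))`. -/
theorem stmt_9 (u K α : ℝ) (hu : 1 < u) (hK : 0 < K) (hα0 : 0 < α) (hα1 : α < 1) :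
    ∃ n₀ : ℤ, α * (K - u ^ (n₀ - 1)) < K - u ^ n₀ ∧
      K - u ^ (n₀ + 1) ≤ α * (K - u ^ n₀) ∧
      0 < K - u ^ n₀ ∧ u ^ (n₀ - 1) < K := by
  have huα : 0 < u - α := by linarith
  set c : ℝ := (1 - α) * K / (u - α) with hc
  have hcpos : 0 < c := div_pos (by nlinarith) huα
  obtain ⟨n, hn1, hn2⟩ := exists_mem_Ioc_zpow hcpos hu
  refine ⟨n + 1, ?_, ?_, ?_, ?_⟩
  · -- u ^ n < c
    have h : u ^ n * (u - α) < (1 - α) * K := by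
      rw [hc, lt_div_iff₀ huα] at hn1; linarith
    have hz : u ^ (n + 1 - 1) = u ^ n := by ring_nf
    rw [hz]
    have : u ^ (n + 1) = u ^ n * u := by rw [zpow_add_one₀ (by linarith : u ≠ 0)]
    nlinarith
  · have h : (1 - α) * K ≤ u ^ (n + 1) * (u - α) := by
      rw [hc, div_le_iff₀ huα] at hn2; linarith
    have : u ^ (n + 1 + 1) = u ^ (n + 1) * u := by
      rw [zpow_add_one₀ (by linarith : u ≠ 0)]
    nlinarith
  ·
    have h : u ^ n * (u - α) < (1 - α) * K := by
      rw [hc, lt_div_iff₀ huα] at hn1; linarith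
    have hnK : u ^ n < K := by nlinarith
    have : u ^ (n + 1) = u ^ n * u := by rw [zpow_add_one₀ (by linarith : u ≠ 0)]
    nlinarith
  · have h : u ^ n * (u - α) < (1 - α) * K := by
      rw [hc, lt_div_iff₀ huα] at hn1; linarith
    have hz : u ^ (n + 1 - 1) = u ^ n := by ring_nf
    rw [hz]; nlinarith
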